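/- Let A = PU where P is positive semidefinite with pairwise distinct eigenvalues, U is unitary, and A is half-normal. Then for every natural number k, P commutes with (U*)^k P U^k. -/

import Mathlib

open Matrix ComplexOrder Polynomial

section Aux

variable {n : ℕ}

/-- Conjugation by a unitary matrix as an algebra homomorphism. -/
noncomputable def conjAH (W : Matrix (Fin n) (Fin n) ℂ) (h1 : Wᴴ * W = 1) (h2 : W * Wᴴ = 1) :
    Matrix (Fin n) (Fin n) ℂ →ₐ[ℂ] Matrix (Fin n) (Fin n) ℂ where
  toFun X := W * X * Wᴴ
  map_one' := by simpa using h2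
  map_mul' X Y := by
    simp only [Matrix.mul_assoc]
    rw [← Matrix.mul_assoc Wᴴ W, h1, Matrix.one_mul]
  map_zero' := by simp
  map_add' X Y := by
    rw [Matrix.mul_add, Matrix.add_mul]
  commutes' c := by
    simp [Algebra.algebraMap_eq_smul_one, Matrix.mul_smul, Matrix.smul_mul, h2]

lemma conjAH_apply (W : Matrix (Fin n) (Fin n) ℂ) (h1 : Wᴴ * W = 1) (h2 : W * Wᴴ = 1)
    (X : Matrix (Fin n) (Fin n) ℂ) : conjAH W h1 h2 X = W * X * Wᴴ := rfl

lemma aeval_conj (W : Matrix (Fin n) (Fin n) ℂ) (h1 : Wᴴ * W = 1) (h2 : W * Wᴴ = 1)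
    (M : Matrix (Fin n) (Fin n) ℂ) (p : ℂ[X]) :
    aeval (W * M * Wᴴ) p = W * aeval M p * Wᴴ := by
  have := aeval_algHom_apply (conjAH W h1 h2) M p
  simpa [conjAH_apply] using this

lemma aeval_diagonal (d : Fin n → ℂ) (p : ℂ[X]) :
    aeval (Matrix.diagonal d) p = Matrix.diagonal (fun i => p.eval (d i)) := by
  have h := aeval_algHom_apply (Matrix.diagonalAlgHom (n := Fin n) (α := ℂ) ℂ) d p
  simp only [Matrix.diagonalAlgHom_apply] at h
  rw [h, Matrix.diagonal_eq_diagonal_iff]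
  intro i
  have h2 := aeval_algHom_apply (Pi.evalAlgHom ℂ (fun _ : Fin n => ℂ) i) d p
  simp only [Pi.evalAlgHom_apply] at h2
  rw [← h2]
  exact congrFun (Polynomial.coe_aeval_eq_eval (d i)) p

lemma commute_aeval {X Y : Matrix (Fin n) (Fin n) ℂ} (h : Commute X Y) (p : ℂ[X]) :
    Commute X (aeval Y p) := by
  induction p using Polynomial.induction_on' with
  | add p q hp hq => rw [map_add]; exact hp.add_right hq
  | monomial k c =>
      rw [Polynomial.aeval_monomial]
      have hc : Commute X (algebraMap ℂ (Matrix (Fin n) (Fin n) ℂ) c) :=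
        (Algebra.commutes c X).symm
      exact hc.mul_right (h.pow_right k)

/-- A matrix commuting with a Hermitian matrix having distinct diagonal form is a
polynomial in it. -/
lemma commutant_poly (W X : Matrix (Fin n) (Fin n) ℂ) (d : Fin n → ℂ)
    (hd : Function.Injective d) (h1 : Wᴴ * W = 1) (h2 : W * Wᴴ = 1)
    (hc : Commute X (W * Matrix.diagonal d * Wᴴ)) :
    ∃ p : ℂ[X], X = aeval (W * Matrix.diagonal d * Wᴴ) p := by
  have hY : (Wᴴ * X * W) * Matrix.diagonal d = Matrix.diagonal d * (Wᴴ * X * W) := by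
    have h := hc.eq
    have h' := congrArg (fun M => Wᴴ * M * W) h
    simp only [Matrix.mul_assoc] at h'
    rw [h1, Matrix.mul_one, ← Matrix.mul_assoc Wᴴ W, h1, Matrix.one_mul] at h'
    simp only [Matrix.mul_assoc]
    exact h'
  have hoff : ∀ i j, i ≠ j → (Wᴴ * X * W) i j = 0 := by
    intro i j hij
    have e := (Matrix.ext_iff.mpr hY) i j
    rw [Matrix.mul_diagonal, Matrix.diagonal_mul] at e
    have h0 : (Wᴴ * X * W) i j * (d j - d i) = 0 := by linear_combination e
    rcases mul_eq_zero.mp h0 with h | h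
    · exact h
    · exact absurd ((hd (sub_eq_zero.mp h)).symm) hij
  have hYdiag : (Wᴴ * X * W) = Matrix.diagonal (fun i => (Wᴴ * X * W) i i) := by
    ext i j
    by_cases h : i = j
    · subst h; rw [Matrix.diagonal_apply_eq]
    · rw [Matrix.diagonal_apply_ne _ h]; exact hoff i j h
  classical
  refine ⟨Lagrange.interpolate Finset.univ d (fun i => (Wᴴ * X * W) i i), ?_⟩
  rw [aeval_conj W h1 h2, aeval_diagonal]
  have heval : (fun i => Polynomial.eval (d i)
      (Lagrange.interpolate Finset.univ d (fun i => (Wᴴ * X * W) i i)))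
      = fun i => (Wᴴ * X * W) i i := by
    funext i
    exact Lagrange.eval_interpolate_at_node _ hd.injOn (Finset.mem_univ i)
  rw [heval, ← hYdiag]
  calc X = (W * Wᴴ) * X * (W * Wᴴ) := by rw [h2, Matrix.one_mul, Matrix.mul_one]
    _ = W * (Wᴴ * X * W) * Wᴴ := by simp only [Matrix.mul_assoc]

end Aux

theorem distinct_singular_values_commute_pow {n : ℕ}
    (P U A : Matrix (Fin n) (Fin n) ℂ) (hP : P.PosSemidef)
    (hdist : Function.Injective hP.isHermitian.eigenvalues)
    (hU : Uᴴ * U = 1) (hA : A = P * U)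
    (hhalf : Commute (Aᴴ * A) (A * Aᴴ)) :
    ∀ k : ℕ, Commute P ((Uᴴ) ^ k * P * U ^ k) := by
  classical
  have hP' := hP.isHermitian
  set W : Matrix (Fin n) (Fin n) ℂ := (hP'.eigenvectorUnitary : Matrix (Fin n) (Fin n) ℂ)
    with hWdef
  have hWmem := (hP'.eigenvectorUnitary).2
  have hW2 : W * Wᴴ = 1 := by
    have := (Matrix.mem_unitaryGroup_iff).mp hWmem
    simpa [Matrix.star_eq_conjTranspose] using this
  have hW1 : Wᴴ * W = 1 := mul_eq_one_comm.mp hW2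
  set d : Fin n → ℂ := RCLike.ofReal ∘ hP'.eigenvalues with hddef
  have hd : Function.Injective d := fun i j h => by
    apply hdist
    exact RCLike.ofReal_injective (K := ℂ) (by simpa [hddef] using h)
  have hPdec : P = W * Matrix.diagonal d * Wᴴ := hP'.spectral_theorem
  have hU' : U * Uᴴ = 1 := mul_eq_one_comm.mp hU
  set d2 : Fin n → ℂ := fun i => d i * d i with hd2def
  have hd2 : Function.Injective d2 := by
    intro i j h
    have h' : (RCLike.ofReal (hP'.eigenvalues i) : ℂ) * RCLike.ofReal (hP'.eigenvalues i)
        = RCLike.ofReal (hP'.eigenvalues j) * RCLike.ofReal (hP'.eigenvalues j) := h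
    rw [← RCLike.ofReal_mul, ← RCLike.ofReal_mul] at h'
    have hre := RCLike.ofReal_injective (K := ℂ) h'
    have hi := hP.eigenvalues_nonneg i
    have hj := hP.eigenvalues_nonneg j
    apply hdist
    rcases mul_self_eq_mul_self_iff.mp hre with hh | hh
    · exact hh
    · linarith
  have hPP : P * P = W * Matrix.diagonal d2 * Wᴴ := by
    rw [hPdec]
    simp only [Matrix.mul_assoc]
    rw [← Matrix.mul_assoc Wᴴ W, hW1, Matrix.one_mul, ← Matrix.mul_assoc (Matrix.diagonal d),
      Matrix.diagonal_mul_diagonal]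
  -- rewrite half-normality
  have hAA1 : Aᴴ * A = Uᴴ * (P * P) * U := by
    rw [hA, Matrix.conjTranspose_mul, hP'.eq]
    simp only [Matrix.mul_assoc]
  have hAA2 : A * Aᴴ = P * P := by
    rw [hA, Matrix.conjTranspose_mul, hP'.eq]
    calc P * U * (Uᴴ * P) = P * (U * Uᴴ) * P := by simp only [Matrix.mul_assoc]
      _ = P * P := by rw [hU', Matrix.mul_one]
  have hc2 : Commute (P * P) (Uᴴ * (P * P) * U) := by
    rw [hAA1, hAA2] at hhalf
    exact hhalf.symm
  set Q : Matrix (Fin n) (Fin n) ℂ := Uᴴ * P * U with hQdef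
  have hQQeq : Q * Q = Uᴴ * (P * P) * U := by
    rw [hQdef]
    calc Uᴴ * P * U * (Uᴴ * P * U) = Uᴴ * P * (U * Uᴴ) * (P * U) := by
          simp only [Matrix.mul_assoc]
      _ = Uᴴ * (P * P) * U := by rw [hU']; simp only [Matrix.mul_assoc, Matrix.mul_one]
  have hV1 : (Uᴴ * W)ᴴ * (Uᴴ * W) = 1 := by
    rw [Matrix.conjTranspose_mul, Matrix.conjTranspose_conjTranspose]
    calc Wᴴ * U * (Uᴴ * W) = Wᴴ * (U * Uᴴ) * W := by simp only [Matrix.mul_assoc]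
      _ = 1 := by rw [hU', Matrix.mul_one, hW1]
  have hV2 : (Uᴴ * W) * (Uᴴ * W)ᴴ = 1 := mul_eq_one_comm.mp hV1
  have hQQdec : Q * Q = (Uᴴ * W) * Matrix.diagonal d2 * (Uᴴ * W)ᴴ := by
    rw [hQQeq, hPP, Matrix.conjTranspose_mul, Matrix.conjTranspose_conjTranspose]
    simp only [Matrix.mul_assoc]
  -- Q*Q is a polynomial in P*P, hence commutes with P
  obtain ⟨p1, hp1⟩ := commutant_poly W (Q * Q) d2 hd2 hW1 hW2
    (by rw [← hPP, hQQeq]; exact hc2.symm)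
  have hPQQ : Commute P (Q * Q) := by
    rw [hp1, ← hPP]
    exact commute_aeval ((Commute.refl P).mul_right (Commute.refl P)) p1
  -- P is a polynomial in Q*Q, hence commutes with Q
  obtain ⟨p2, hp2⟩ := commutant_poly (Uᴴ * W) P d2 hd2 hV1 hV2
    (by rw [← hQQdec]; exact hPQQ)
  have hQP : Commute Q P := by
    rw [hp2, ← hQQdec]
    exact commute_aeval ((Commute.refl Q).mul_right (Commute.refl Q)) p2
  -- Q is a polynomial in P
  obtain ⟨p0, hp0⟩ := commutant_poly W Q d hd hW1 hW2 (by rw [← hPdec]; exact hQP)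
  rw [← hPdec] at hp0
  -- conjugation facts for Uᴴ
  have hcc1 : (Uᴴ)ᴴ * Uᴴ = 1 := by rw [Matrix.conjTranspose_conjTranspose]; exact hU'
  have hcc2 : Uᴴ * (Uᴴ)ᴴ = 1 := by rw [Matrix.conjTranspose_conjTranspose]; exact hU
  -- main induction: each Uᴴ^k * P * U^k is a polynomial in P
  have key : ∀ k : ℕ, ∃ q : Polynomial ℂ, (Uᴴ) ^ k * P * U ^ k = aeval P q := by
    intro k
    induction k with
    | zero => exact ⟨Polynomial.X, by simp⟩
    | succ k ih =>
        obtain ⟨q, hq⟩ := ih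
        refine ⟨q.comp p0, ?_⟩
        have hstep : (Uᴴ) ^ (k + 1) * P * U ^ (k + 1)
            = Uᴴ * ((Uᴴ) ^ k * P * U ^ k) * U := by
          rw [pow_succ' Uᴴ k, pow_succ U k]
          simp only [Matrix.mul_assoc]
        rw [hstep, hq]
        have h3 : Uᴴ * (aeval P q) * U = Uᴴ * (aeval P q) * (Uᴴ)ᴴ := by
          rw [Matrix.conjTranspose_conjTranspose]
        rw [h3, ← aeval_conj Uᴴ hcc1 hcc2 P q]
        have hQ' : Uᴴ * P * (Uᴴ)ᴴ = Q := by
          rw [Matrix.conjTranspose_conjTranspose, hQdef]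
        rw [hQ', hp0, ← Polynomial.aeval_comp]
  intro k
  obtain ⟨q, hq⟩ := key k
  rw [hq]
  exact commute_aeval (Commute.refl P) q
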